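/- Let n ≥ 1 and k ≥ 1 be integers and let a ∈ C^∞(ℝ × ℝⁿ; ℝ). Define b : ℝⁿ → ℝ by b(x) := |x|^k · a(|x|, x/|x|) for x ≠ 0 and b(0) := 0. Then b is (k−1)-times continuously differentiable on ℝⁿ and its (k−1)-th derivative is Lipschitz on every compact subset of ℝⁿ (i.e. b ∈ C^{k−1,1}_{loc}(ℝⁿ)). If moreover a(t,y) does not depend on the first variable t, then the (k−1)-th derivative of b is Lipschitz on all of ℝⁿ (i.e. b ∈ C^{k−1,1}(ℝⁿ)). -/

import Mathlib

noncomputable section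

open MeasureTheory Real

section StmtAux
open Set Filter Topology

variable {E : Type*} [NormedAddCommGroup E] [InnerProductSpace ℝ E] [FiniteDimensional ℝ E]

set_option linter.unusedSectionVars false

theorem aux_smoothG (k N : ℕ) (a : ℝ × E → ℝ) (ha : ContDiff ℝ (⊤ : ℕ∞) a) :
    ContDiffOn ℝ N (fun p : ℝ × E => ‖p.2‖ ^ k * a (p.1 * ‖p.2‖, ‖p.2‖⁻¹ • p.2))
      {p : ℝ × E | p.2 ≠ 0} := by
  intro p hp
  have hp2 : p.2 ≠ 0 := hp
  have hn : ContDiffAt ℝ N (fun q : ℝ × E => ‖q.2‖) p :=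
    (contDiffAt_norm ℝ hp2).comp p contDiff_snd.contDiffAt
  have h1 : ContDiffAt ℝ N (fun q : ℝ × E => q.1 * ‖q.2‖) p :=
    contDiff_fst.contDiffAt.mul hn
  have h2 : ContDiffAt ℝ N (fun q : ℝ × E => ‖q.2‖⁻¹ • q.2) p :=
    (hn.inv (norm_ne_zero_iff.2 hp2)).smul contDiff_snd.contDiffAt
  have h3 : ContDiffAt ℝ N (fun q : ℝ × E => a (q.1 * ‖q.2‖, ‖q.2‖⁻¹ • q.2)) p :=
    (ha.of_le (by exact_mod_cast le_top)).contDiffAt.comp p (h1.prodMk h2)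
  exact ((hn.pow k).mul h3).contDiffWithinAt

theorem aux_smoothb (k N : ℕ) (a : ℝ × E → ℝ) (ha : ContDiff ℝ (⊤ : ℕ∞) a)
    (b : E → ℝ) (hb : ∀ x : E, x ≠ 0 → b x = ‖x‖ ^ k * a (‖x‖, ‖x‖⁻¹ • x)) :
    ContDiffOn ℝ N b {x : E | x ≠ 0} := by
  have h0 : ContDiffOn ℝ N (fun x : E => ‖x‖ ^ k * a (‖x‖, ‖x‖⁻¹ • x)) {x : E | x ≠ 0} := by
    intro x hx
    have hx0 : x ≠ 0 := hx
    have hn : ContDiffAt ℝ N (fun y : E => ‖y‖) x := contDiffAt_norm ℝ hx0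
    have h2 : ContDiffAt ℝ N (fun y : E => ‖y‖⁻¹ • y) x :=
      (hn.inv (norm_ne_zero_iff.2 hx0)).smul contDiffAt_id
    have h3 : ContDiffAt ℝ N (fun y : E => a (‖y‖, ‖y‖⁻¹ • y)) x :=
      (ha.of_le (by exact_mod_cast le_top)).contDiffAt.comp x (hn.prodMk h2)
    exact ((hn.pow k).mul h3).contDiffWithinAt
  exact h0.congr (fun x hx => hb x hx)

theorem aux_shift {E' : Type*} [NormedAddCommGroup E'] [NormedSpace ℝ E']
    {F : Type*} [NormedAddCommGroup F] [NormedSpace ℝ F]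
    {f : E' → F} {V : Set E'} (hV : IsOpen V)
    {N : ℕ} (hf : ContDiffOn ℝ N f V) (v : E') {m : ℕ} (hm : m ≤ N) {x : E'}
    (hx : x + v ∈ V) :
    iteratedFDerivWithin ℝ m (fun z => f (z + v)) ((fun z => z + v) ⁻¹' V) x
      = iteratedFDerivWithin ℝ m f V (x + v) := by
  have hV' : IsOpen ((fun z : E' => z + v) ⁻¹' V) := hV.preimage (continuous_add_right v)
  have hp : HasFTaylorSeriesUpToOn N f (ftaylorSeriesWithin ℝ f V) V :=
    hf.ftaylorSeriesWithin hV.uniqueDiffOn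
  have hmaps : Set.MapsTo (fun z : E' => z + v) ((fun z : E' => z + v) ⁻¹' V) V :=
    Set.mapsTo_preimage _ _
  have hp' : HasFTaylorSeriesUpToOn N (fun z => f (z + v))
      (fun z => ftaylorSeriesWithin ℝ f V (z + v)) ((fun z : E' => z + v) ⁻¹' V) := by
    constructor
    · intro y hy
      exact hp.zero_eq _ hy
    · intro m' hm' y hy
      have h2 : HasFDerivWithinAt (fun z : E' => z + v) (ContinuousLinearMap.id ℝ E')
          ((fun z : E' => z + v) ⁻¹' V) y := ((hasFDerivAt_id y).add_const v).hasFDerivWithinAt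
      have h3 := (hp.fderivWithin m' hm' (y + v) hy).comp y h2 hmaps
      simp only [ContinuousLinearMap.comp_id] at h3
      exact h3
    · intro m' hm'
      exact (hp.cont m' hm').comp (continuous_add_right v).continuousOn hmaps
  exact (hp'.eq_iteratedFDerivWithin_of_uniqueDiffOn (by exact_mod_cast hm)
    hV'.uniqueDiffOn hx).symm

theorem aux_key (k : ℕ) (a : ℝ × E → ℝ) (ha : ContDiff ℝ (⊤ : ℕ∞) a)
    (b : E → ℝ) (hb : ∀ x : E, x ≠ 0 → b x = ‖x‖ ^ k * a (‖x‖, ‖x‖⁻¹ • x))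
    {m : ℕ} (hm : m ≤ k) {Λ : ℝ} (hΛ : 0 < Λ) :
    ∃ C : ℝ, 0 ≤ C ∧
      (∀ x : E, x ≠ 0 → ‖x‖ ≤ Λ → ‖iteratedFDeriv ℝ m b x‖ ≤ C * ‖x‖ ^ (k - m)) ∧
      ((∀ (t₁ t₂ : ℝ) (y : E), a (t₁, y) = a (t₂, y)) →
        ∀ x : E, x ≠ 0 → ‖iteratedFDeriv ℝ m b x‖ ≤ C * ‖x‖ ^ (k - m)) := by
  classical
  have hU : IsOpen {x : E | x ≠ 0} := isOpen_ne
  have hW : IsOpen {p : ℝ × E | p.2 ≠ 0} := isOpen_ne.preimage continuous_snd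
  set G : ℝ × E → ℝ := fun p => ‖p.2‖ ^ k * a (p.1 * ‖p.2‖, ‖p.2‖⁻¹ • p.2) with hGdef
  have hG : ContDiffOn ℝ (k + 1 : ℕ) G {p : ℝ × E | p.2 ≠ 0} := aux_smoothG k (k+1) a ha
  have hbU : ContDiffOn ℝ (k + 1 : ℕ) b {x : E | x ≠ 0} := aux_smoothb k (k+1) a ha b hb
  have hmN : (m : WithTop ℕ∞) ≤ ((k + 1 : ℕ) : WithTop ℕ∞) :=
    by exact_mod_cast Nat.le_succ_of_le hm
  have hsubW : Set.Icc (0:ℝ) Λ ×ˢ Metric.sphere (0:E) 1 ⊆ {p : ℝ × E | p.2 ≠ 0} := by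
    rintro ⟨t, ω⟩ ⟨-, hω⟩
    have h1 : ‖ω‖ = 1 := mem_sphere_zero_iff_norm.1 hω
    show ω ≠ 0
    intro h; rw [h] at h1; simp at h1
  have hcont : ContinuousOn (iteratedFDerivWithin ℝ m G {p : ℝ × E | p.2 ≠ 0})
      {p : ℝ × E | p.2 ≠ 0} :=
    hG.continuousOn_iteratedFDerivWithin hmN hW.uniqueDiffOn
  obtain ⟨C₀, hC₀⟩ := (isCompact_Icc.prod (isCompact_sphere (0:E) 1)).exists_bound_of_continuousOn
      (hcont.mono hsubW)
  -- the partial-slice bound via translation + inr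
  have hbound_gt : ∀ t'' : ℝ, t'' ∈ Set.Icc (0:ℝ) Λ → ∀ ω : E, ‖ω‖ = 1 →
      ‖iteratedFDerivWithin ℝ m (fun y : E => G (t'', y)) {x : E | x ≠ 0} ω‖ ≤ max C₀ 0 := by
    intro t'' ht'' ω hω
    have hωne : ω ≠ 0 := by intro h; rw [h] at hω; simp at hω
    have h₁ : (fun y : E => G (t'', y))
        = (fun z : ℝ × E => G (z + (t'', 0))) ∘ (ContinuousLinearMap.inr ℝ ℝ E) := by
      funext y
      simp [Prod.mk_add_mk]
    have hGsh : ContDiffOn ℝ (k + 1 : ℕ) (fun z : ℝ × E => G (z + (t'', 0)))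
        {p : ℝ × E | p.2 ≠ 0} := by
      apply hG.comp ((contDiff_id.add contDiff_const).contDiffOn)
      intro z hz
      show (z + ((t'', 0) : ℝ × E)).2 ≠ 0
      simpa using hz
    have hpre2 : (ContinuousLinearMap.inr ℝ ℝ E) ⁻¹' {p : ℝ × E | p.2 ≠ 0} = {x : E | x ≠ 0} := by
      ext y
      simp
    have h₂ := (ContinuousLinearMap.inr ℝ ℝ E).iteratedFDerivWithin_comp_right hGsh
      hW.uniqueDiffOn (by rw [hpre2]; exact hU.uniqueDiffOn)
      (show (ContinuousLinearMap.inr ℝ ℝ E) ω ∈ {p : ℝ × E | p.2 ≠ 0} from hωne) hmN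
    rw [hpre2] at h₂
    have hpre3 : (fun z : ℝ × E => z + (t'', 0)) ⁻¹' {p : ℝ × E | p.2 ≠ 0}
        = {p : ℝ × E | p.2 ≠ 0} := by
      ext z
      simp
    have h₃ := aux_shift hW hG ((t'', 0) : ℝ × E) (Nat.le_succ_of_le hm)
      (show (((0:ℝ), ω) + (t'', 0)) ∈ {p : ℝ × E | p.2 ≠ 0} from by simpa using hωne)
    rw [hpre3] at h₃
    have hpt : (((0:ℝ), ω) + (t'', 0)) = ((t'', ω) : ℝ × E) := by
      simp [Prod.mk_add_mk]
    rw [hpt] at h₃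
    have hinr : ‖(ContinuousLinearMap.inr ℝ ℝ E)‖ ≤ 1 := by
      apply ContinuousLinearMap.opNorm_le_bound _ zero_le_one
      intro y
      rw [one_mul]
      show ‖((0:ℝ), y)‖ ≤ ‖y‖
      rw [Prod.norm_def]
      simp
    have hmem : ((t'', ω) : ℝ × E) ∈ Set.Icc (0:ℝ) Λ ×ˢ Metric.sphere (0:E) 1 :=
      ⟨ht'', mem_sphere_zero_iff_norm.2 hω⟩
    calc ‖iteratedFDerivWithin ℝ m (fun y : E => G (t'', y)) {x : E | x ≠ 0} ω‖
        = ‖(iteratedFDerivWithin ℝ m G {p : ℝ × E | p.2 ≠ 0} ((t'', ω) : ℝ × E)).compContinuousLinearMap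
            (fun _ : Fin m => ContinuousLinearMap.inr ℝ ℝ E)‖ := by
          rw [h₁, h₂]
          rw [show (ContinuousLinearMap.inr ℝ ℝ E) ω = (((0:ℝ), ω) : ℝ × E) from rfl, h₃]
      _ ≤ ‖iteratedFDerivWithin ℝ m G {p : ℝ × E | p.2 ≠ 0} ((t'', ω) : ℝ × E)‖
            * ∏ _i : Fin m, ‖ContinuousLinearMap.inr ℝ ℝ E‖ :=
          ContinuousMultilinearMap.norm_compContinuousLinearMap_le _ _
      _ ≤ max C₀ 0 * 1 := by
          apply mul_le_mul (le_max_of_le_left (hC₀ _ hmem)) ?_ ?_ (le_max_right _ _)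
          · exact Finset.prod_le_one (fun i _ => ContinuousLinearMap.opNorm_nonneg _) (fun i _ => hinr)
          · exact Finset.prod_nonneg (fun i _ => ContinuousLinearMap.opNorm_nonneg _)
      _ = max C₀ 0 := mul_one _
  -- the main scaling estimate
  have main : ∀ t : ℝ, 0 < t →
      (t ≤ Λ ∨ (∀ (t₁ t₂ : ℝ) (y : E), a (t₁, y) = a (t₂, y))) →
      ∀ ω : E, ‖ω‖ = 1 → ‖iteratedFDeriv ℝ m b (t • ω)‖ ≤ max C₀ 0 * t ^ (k - m) := by
    intro t ht hcase ω hω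
    have hωne : ω ≠ 0 := by intro h; rw [h] at hω; simp at hω
    have hωU : ω ∈ {x : E | x ≠ 0} := hωne
    have htne : t ≠ 0 := ht.ne'
    have htω : t • ω ≠ 0 := smul_ne_zero htne hωne
    set Lt : E →L[ℝ] E := t • ContinuousLinearMap.id ℝ E with hLtdef
    have hLt : ∀ y : E, Lt y = t • y := fun y => rfl
    have hpre : Lt ⁻¹' {x : E | x ≠ 0} = {x : E | x ≠ 0} := by
      ext y
      simp only [Set.mem_preimage, Set.mem_setOf_eq, hLt, smul_ne_zero_iff]
      exact ⟨fun h => h.2, fun h => ⟨htne, h⟩⟩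
    have hA := Lt.iteratedFDerivWithin_comp_right hbU hU.uniqueDiffOn
        (by rw [hpre]; exact hU.uniqueDiffOn)
        (show Lt ω ∈ {x : E | x ≠ 0} from htω) hmN
    rw [hpre] at hA
    set gt : E → ℝ := fun y => G (t, y) with hgtdef
    have hgtc : ContDiffOn ℝ (k + 1 : ℕ) gt {x : E | x ≠ 0} := by
      have hmk : ContDiffOn ℝ (k + 1 : ℕ) (fun y : E => ((t, y) : ℝ × E)) {x : E | x ≠ 0} :=
        (contDiff_const.prodMk contDiff_id).contDiffOn
      exact hG.comp hmk (fun y hy => hy)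
    have hEq : Set.EqOn (b ∘ Lt) (t ^ k • gt) {x : E | x ≠ 0} := by
      intro y hy
      have hyne : y ≠ 0 := hy
      have h1 : ‖t • y‖ = t * ‖y‖ := by
        rw [norm_smul, Real.norm_eq_abs, abs_of_pos ht]
      have h2 : ‖t • y‖⁻¹ • (t • y) = ‖y‖⁻¹ • y := by
        rw [h1, smul_smul]
        congr 1
        rw [mul_inv, mul_comm t⁻¹, mul_assoc, inv_mul_cancel₀ htne, mul_one]
      show (b ∘ Lt) y = t ^ k • gt y
      have h3 : (b ∘ Lt) y = b (t • y) := rfl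
      rw [h3, hb _ (smul_ne_zero htne hyne), h2, h1]
      simp only [hgtdef, hGdef, smul_eq_mul]
      rw [mul_pow]
      ring
    have hB : iteratedFDerivWithin ℝ m (b ∘ Lt) {x : E | x ≠ 0} ω
        = iteratedFDerivWithin ℝ m (t ^ k • gt) {x : E | x ≠ 0} ω :=
      iteratedFDerivWithin_congr hEq hωU m
    have hC' : iteratedFDerivWithin ℝ m (t ^ k • gt) {x : E | x ≠ 0} ω
        = t ^ k • iteratedFDerivWithin ℝ m gt {x : E | x ≠ 0} ω :=
      iteratedFDerivWithin_const_smul_apply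
        (hgtc.of_le hmN ω hωU) hU.uniqueDiffOn hωU
    have hsm : (iteratedFDerivWithin ℝ m b {x : E | x ≠ 0} (t • ω)).compContinuousLinearMap
        (fun _ : Fin m => Lt) = t ^ m • iteratedFDerivWithin ℝ m b {x : E | x ≠ 0} (t • ω) := by
      ext v
      have hms := (iteratedFDerivWithin ℝ m b {x : E | x ≠ 0} (t • ω)).map_smul_univ
        (fun _ : Fin m => t) v
      simp only [ContinuousMultilinearMap.compContinuousLinearMap_apply,
        ContinuousMultilinearMap.smul_apply]
      rw [show (fun i => Lt (v i)) = fun i => t • v i from rfl, hms]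
      simp [Finset.prod_const]
    have hcomb : t ^ m • iteratedFDerivWithin ℝ m b {x : E | x ≠ 0} (t • ω)
        = t ^ k • iteratedFDerivWithin ℝ m gt {x : E | x ≠ 0} ω := by
      rw [← hsm]
      rw [show Lt ω = t • ω from rfl] at hA
      rw [← hA, hB, hC']
    have hgtD : ‖iteratedFDerivWithin ℝ m gt {x : E | x ≠ 0} ω‖ ≤ max C₀ 0 := by
      rcases hcase with hloc | hind
      · exact hbound_gt t ⟨ht.le, hloc⟩ ω hω
      · have hgt0 : gt = fun y : E => G ((0:ℝ), y) := by
          funext y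
          simp only [hgtdef, hGdef]
          congr 1
          exact hind _ _ _
        rw [hgt0]
        exact hbound_gt 0 ⟨le_refl 0, hΛ.le⟩ ω hω
    have htm : (t : ℝ) ^ m ≠ 0 := pow_ne_zero _ htne
    have hXb : iteratedFDerivWithin ℝ m b {x : E | x ≠ 0} (t • ω)
        = ((t ^ m)⁻¹ * t ^ k) • iteratedFDerivWithin ℝ m gt {x : E | x ≠ 0} ω := by
      have h := congrArg (fun z => (t ^ m)⁻¹ • z) hcomb
      simpa [smul_smul, inv_mul_cancel₀ htm] using h
    have hnorm : ‖iteratedFDeriv ℝ m b (t • ω)‖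
        = ((t ^ m)⁻¹ * t ^ k) * ‖iteratedFDerivWithin ℝ m gt {x : E | x ≠ 0} ω‖ := by
      rw [← iteratedFDerivWithin_of_isOpen m hU (show t • ω ∈ {x : E | x ≠ 0} from htω),
        hXb]
      rw [norm_smul ((t ^ m)⁻¹ * t ^ k) (iteratedFDerivWithin ℝ m gt {x : E | x ≠ 0} ω)]
      congr 1
      rw [Real.norm_eq_abs, abs_of_pos]
      positivity
    rw [hnorm]
    have hpow : (t ^ m)⁻¹ * t ^ k = t ^ (k - m) := by
      rw [pow_sub₀ t htne hm]; ring
    rw [hpow]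
    calc t ^ (k - m) * ‖iteratedFDerivWithin ℝ m gt {x : E | x ≠ 0} ω‖
        ≤ t ^ (k - m) * max C₀ 0 := by
          apply mul_le_mul_of_nonneg_left hgtD
          positivity
      _ = max C₀ 0 * t ^ (k - m) := mul_comm _ _
  -- conclude
  refine ⟨max C₀ 0, le_max_right _ _, ?_, ?_⟩
  · intro x hx hxΛ
    have hx0 : 0 < ‖x‖ := norm_pos_iff.2 hx
    have hω : ‖(‖x‖⁻¹ • x)‖ = 1 := by
      rw [norm_smul, norm_inv, norm_norm]
      field_simp
    have hxx : ‖x‖ • (‖x‖⁻¹ • x) = x := by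
      rw [smul_smul, mul_inv_cancel₀ hx0.ne', one_smul]
    have h := main ‖x‖ hx0 (Or.inl hxΛ) _ hω
    rwa [hxx] at h
  · intro hind x hx
    have hx0 : 0 < ‖x‖ := norm_pos_iff.2 hx
    have hω : ‖(‖x‖⁻¹ • x)‖ = 1 := by
      rw [norm_smul, norm_inv, norm_norm]
      field_simp
    have hxx : ‖x‖ • (‖x‖⁻¹ • x) = x := by
      rw [smul_smul, mul_inv_cancel₀ hx0.ne', one_smul]
    have h := main ‖x‖ hx0 (Or.inr hind) _ hω
    rwa [hxx] at h

theorem aux_lip {F : Type*} [NormedAddCommGroup F] [NormedSpace ℝ F]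
    {f : E → F} {s : Set E} (hs : Convex ℝ s) (hf : Continuous f)
    {M : ℝ}
    (hd : ∀ x ∈ s, x ≠ 0 → HasFDerivAt f (fderiv ℝ f x) x ∧ ‖fderiv ℝ f x‖ ≤ M) :
    ∀ x ∈ s, ∀ y ∈ s, ‖f x - f y‖ ≤ M * ‖x - y‖ := by
  -- case of a segment avoiding 0
  have claim1 : ∀ x ∈ s, ∀ y ∈ s, (0 : E) ∉ segment ℝ y x → ‖f x - f y‖ ≤ M * ‖x - y‖ := by
    intro x hx y hy h0
    have hsub : segment ℝ y x ⊆ s := hs.segment_subset hy hx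
    apply Convex.norm_image_sub_le_of_norm_hasFDerivWithin_le
      (f' := fun z => fderiv ℝ f z) ?_ ?_ (convex_segment y x)
      (left_mem_segment ℝ y x) (right_mem_segment ℝ y x)
    · intro z hz
      have hz0 : z ≠ 0 := fun h => h0 (h ▸ hz)
      exact ((hd z (hsub hz) hz0).1).hasFDerivWithinAt
    · intro z hz
      have hz0 : z ≠ 0 := fun h => h0 (h ▸ hz)
      exact (hd z (hsub hz) hz0).2
  -- distance to zero
  have claim0 : (0 : E) ∈ s → ∀ x ∈ s, ‖f x - f 0‖ ≤ M * ‖x‖ := by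
    intro h0s x hx
    rcases eq_or_ne x 0 with rfl | hx0
    · simp
    have hM : 0 ≤ M := le_trans (norm_nonneg _) (hd x hx hx0).2
    have key : ∀ δ ∈ Set.Ioc (0:ℝ) 1, ‖f x - f (δ • x)‖ ≤ M * ‖x‖ := by
      intro δ hδ
      have hmem : δ • x ∈ s := by
        have : δ • x ∈ segment ℝ 0 x :=
          ⟨1 - δ, δ, by linarith [hδ.2], le_of_lt hδ.1, by linarith, by simp⟩
        exact hs.segment_subset h0s hx this
      have hseg : (0 : E) ∉ segment ℝ (δ • x) x := by
        rintro ⟨u, v, hu, hv, huv, heq⟩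
        have heq' : (u * δ + v) • x = 0 := by
          rw [← heq, smul_smul, add_smul]
        have hpos : 0 < u * δ + v := by
          rcases lt_or_eq_of_le hv with h | h
          · have : 0 ≤ u * δ := mul_nonneg hu (le_of_lt hδ.1)
            linarith
          · have hv0 : v = 0 := h.symm
            have hu1 : u = 1 := by linarith
            rw [hu1, hv0, one_mul, add_zero]
            exact hδ.1
        rcases smul_eq_zero.1 heq' with h | h
        · exact absurd h (ne_of_gt hpos)
        · exact hx0 h
      have := claim1 x hx (δ • x) hmem hseg
      calc ‖f x - f (δ • x)‖ ≤ M * ‖x - δ • x‖ := this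
        _ = M * (|1 - δ| * ‖x‖) := by
            rw [show x - δ • x = (1 - δ) • x by rw [sub_smul, one_smul], norm_smul,
              Real.norm_eq_abs]
        _ ≤ M * (1 * ‖x‖) := by
            apply mul_le_mul_of_nonneg_left ?_ hM
            apply mul_le_mul_of_nonneg_right ?_ (norm_nonneg x)
            rw [abs_of_nonneg (by linarith [hδ.2])]
            linarith [hδ.1]
        _ = M * ‖x‖ := by ring
    have h1 : Filter.Tendsto (fun δ : ℝ => ‖f x - f (δ • x)‖) (𝓝[>] 0)
        (𝓝 ‖f x - f 0‖) := by
      have h2 : Filter.Tendsto (fun δ : ℝ => f (δ • x)) (𝓝 0) (𝓝 (f 0)) := by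
        have := (hf.comp (continuous_id.smul (continuous_const : Continuous fun _ : ℝ => x))).tendsto 0
        simpa [Function.comp_def] using this
      exact ((tendsto_const_nhds.sub h2).norm).mono_left nhdsWithin_le_nhds
    refine le_of_tendsto h1 ?_
    filter_upwards [Ioc_mem_nhdsGT zero_lt_one] with δ hδ using key δ hδ
  -- combine
  intro x hx y hy
  by_cases h0 : (0 : E) ∈ segment ℝ y x
  · have h0s : (0 : E) ∈ s := hs.segment_subset hy hx h0
    have d1 := claim0 h0s x hx
    have d2 := claim0 h0s y hy
    have hdist : ‖y‖ + ‖x‖ = ‖y - x‖ := by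
      have := dist_add_dist_of_mem_segment h0
      simpa [dist_eq_norm] using this
    calc ‖f x - f y‖ = ‖(f x - f 0) + (f 0 - f y)‖ := by rw [sub_add_sub_cancel]
      _ ≤ ‖f x - f 0‖ + ‖f 0 - f y‖ := norm_add_le _ _
      _ ≤ M * ‖x‖ + M * ‖y‖ := by
          have := claim0 h0s y hy
          rw [← norm_sub_rev (f y)]
          exact add_le_add d1 this
      _ = M * (‖y‖ + ‖x‖) := by ring
      _ = M * ‖y - x‖ := by rw [hdist]
      _ = M * ‖x - y‖ := by rw [norm_sub_rev]
  · exact claim1 x hx y hy h0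
end StmtAux

/-- Let `a ∈ C^∞(ℝ × ℝⁿ)` and `b(x) = |x|^k a(|x|, x/|x|)` with `b(0) = 0` (`k ≥ 1`).
Then `b ∈ C^{k-1,1}_loc(ℝⁿ)`; if `a` does not depend on its first variable, then
`b ∈ C^{k-1,1}(ℝⁿ)` (its `(k-1)`-th derivative is globally Lipschitz). -/
theorem stmt7 (n k : ℕ) (hn : 1 ≤ n) (hk : 1 ≤ k)
    (a : ℝ × EuclideanSpace ℝ (Fin n) → ℝ) (ha : ContDiff ℝ (⊤ : ℕ∞) a)
    (b : EuclideanSpace ℝ (Fin n) → ℝ)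
    (hb : ∀ x : EuclideanSpace ℝ (Fin n), x ≠ 0 → b x = ‖x‖ ^ k * a (‖x‖, ‖x‖⁻¹ • x))
    (hb0 : b 0 = 0) :
    (ContDiff ℝ (k - 1 : ℕ) b ∧
      ∀ K : Set (EuclideanSpace ℝ (Fin n)), IsCompact K →
        ∃ L : NNReal, LipschitzOnWith L (iteratedFDeriv ℝ (k - 1) b) K) ∧
    ((∀ (t₁ t₂ : ℝ) (y : EuclideanSpace ℝ (Fin n)), a (t₁, y) = a (t₂, y)) →
      ∃ L : NNReal, LipschitzWith L (iteratedFDeriv ℝ (k - 1) b)) := by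
  classical
  have hU : IsOpen {x : EuclideanSpace ℝ (Fin n) | x ≠ 0} := isOpen_ne
  have hbU : ContDiffOn ℝ (k + 1 : ℕ) b {x : EuclideanSpace ℝ (Fin n) | x ≠ 0} :=
    aux_smoothb k (k + 1) a ha b hb
  have hKk : k - 1 + 1 = k := Nat.sub_add_cancel hk
  have hdiffAt : ∀ m : ℕ, m ≤ k → ∀ x : EuclideanSpace ℝ (Fin n), x ≠ 0 →
      DifferentiableAt ℝ (iteratedFDeriv ℝ m b) x := by
    intro m hmk x hx
    have h1 : DifferentiableWithinAt ℝ
        (iteratedFDerivWithin ℝ m b {x : EuclideanSpace ℝ (Fin n) | x ≠ 0})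
        {x : EuclideanSpace ℝ (Fin n) | x ≠ 0} x :=
      hbU.differentiableOn_iteratedFDerivWithin (by exact_mod_cast Nat.lt_succ_of_le hmk)
        hU.uniqueDiffOn x hx
    have h2 : DifferentiableWithinAt ℝ (iteratedFDeriv ℝ m b)
        {x : EuclideanSpace ℝ (Fin n) | x ≠ 0} x :=
      h1.congr (fun y hy => (iteratedFDerivWithin_of_isOpen m hU hy).symm)
        (iteratedFDerivWithin_of_isOpen m hU hx).symm
    exact h2.differentiableAt (hU.mem_nhds hx)
  have hcontAt : ∀ m : ℕ, m ≤ k → ∀ x : EuclideanSpace ℝ (Fin n), x ≠ 0 →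
      ContinuousAt (iteratedFDeriv ℝ m b) x := by
    intro m hmk x hx
    have h1 : ContinuousOn (iteratedFDerivWithin ℝ m b {x : EuclideanSpace ℝ (Fin n) | x ≠ 0})
        {x : EuclideanSpace ℝ (Fin n) | x ≠ 0} :=
      hbU.continuousOn_iteratedFDerivWithin (by exact_mod_cast Nat.le_succ_of_le hmk)
        hU.uniqueDiffOn
    have h2 : ContinuousOn (iteratedFDeriv ℝ m b) {x : EuclideanSpace ℝ (Fin n) | x ≠ 0} :=
      h1.congr (fun y hy => (iteratedFDerivWithin_of_isOpen m hU hy).symm)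
    exact h2.continuousAt (hU.mem_nhds hx)
  have hlittle : ∀ m : ℕ, m + 1 ≤ k - 1 → iteratedFDeriv ℝ m b 0 = 0 →
      HasFDerivAt (iteratedFDeriv ℝ m b)
        (0 : EuclideanSpace ℝ (Fin n) →L[ℝ] (EuclideanSpace ℝ (Fin n) [×m]→L[ℝ] ℝ)) 0 := by
    intro m hm1 h0
    have hmk : m ≤ k := by omega
    obtain ⟨C, hC0, hbound, -⟩ := aux_key k a ha b hb hmk one_pos
    rw [hasFDerivAt_iff_isLittleO_nhds_zero]
    have heq : (fun h : EuclideanSpace ℝ (Fin n) =>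
        iteratedFDeriv ℝ m b (0 + h) - iteratedFDeriv ℝ m b 0
          - (0 : EuclideanSpace ℝ (Fin n) →L[ℝ]
              (EuclideanSpace ℝ (Fin n) [×m]→L[ℝ] ℝ)) h)
        = fun h => iteratedFDeriv ℝ m b h := by
      funext h
      simp [h0]
    rw [heq, Asymptotics.isLittleO_iff]
    intro c hc
    have hδpos : 0 < min 1 (c / (C + 1)) := lt_min zero_lt_one (div_pos hc (by linarith))
    filter_upwards [Metric.ball_mem_nhds 0 hδpos] with x hx
    rcases eq_or_ne x 0 with rfl | hxne
    · simp [h0]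
    · have hxn : ‖x‖ < min 1 (c / (C + 1)) := by
        simpa [dist_eq_norm] using hx
      have h1 : ‖x‖ ≤ 1 := le_of_lt (lt_of_lt_of_le hxn (min_le_left _ _))
      calc ‖iteratedFDeriv ℝ m b x‖ ≤ C * ‖x‖ ^ (k - m) := hbound x hxne h1
        _ ≤ C * ‖x‖ ^ 2 := by
            apply mul_le_mul_of_nonneg_left ?_ hC0
            exact pow_le_pow_of_le_one (norm_nonneg x) h1 (by omega)
        _ = C * ‖x‖ * ‖x‖ := by ring
        _ ≤ (C + 1) * (c / (C + 1)) * ‖x‖ := by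
            apply mul_le_mul_of_nonneg_right ?_ (norm_nonneg x)
            apply mul_le_mul (by linarith) (le_of_lt (lt_of_lt_of_le hxn (min_le_right _ _)))
              (norm_nonneg x) (by linarith)
        _ = c * ‖x‖ := by field_simp
  have hzero : ∀ m : ℕ, m ≤ k - 1 → iteratedFDeriv ℝ m b 0 = 0 := by
    intro m
    induction m with
    | zero =>
      intro _
      ext v
      simp [hb0]
    | succ m ih =>
      intro hm1
      have h0 := ih (by omega)
      have hder := hlittle m (by omega) h0
      have hfd : fderiv ℝ (iteratedFDeriv ℝ m b) 0 = 0 := hder.fderiv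
      ext v
      rw [iteratedFDeriv_succ_apply_left, hfd]
      simp
  have hcont0 : ∀ m : ℕ, m ≤ k - 1 → ContinuousAt (iteratedFDeriv ℝ m b) 0 := by
    intro m hmK
    obtain ⟨C, hC0, hbound, -⟩ := aux_key k a ha b hb (show m ≤ k by omega) one_pos
    have htend : Filter.Tendsto (iteratedFDeriv ℝ m b) (nhds 0) (nhds 0) := by
      apply squeeze_zero_norm' (a := fun x : EuclideanSpace ℝ (Fin n) => C * ‖x‖ ^ (k - m))
      · filter_upwards [Metric.closedBall_mem_nhds (0 : EuclideanSpace ℝ (Fin n)) one_pos]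
          with x hx
        rcases eq_or_ne x 0 with rfl | hxne
        · simp [hzero m hmK, zero_pow (show k - m ≠ 0 by omega)]
        · exact hbound x hxne (by simpa [dist_eq_norm] using hx)
      · have hcg : Continuous fun x : EuclideanSpace ℝ (Fin n) => C * ‖x‖ ^ (k - m) :=
          continuous_const.mul (continuous_norm.pow _)
        have h := hcg.tendsto 0
        simpa [zero_pow (show k - m ≠ 0 by omega)] using h
    unfold ContinuousAt
    rw [hzero m hmK]
    exact htend
  have hcd : ContDiff ℝ (k - 1 : ℕ) b := by
    rw [contDiff_nat_iff_continuous_differentiable]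
    constructor
    · intro m hmK
      rw [continuous_iff_continuousAt]
      intro x
      rcases eq_or_ne x 0 with rfl | hx
      · exact hcont0 m hmK
      · exact hcontAt m (by omega) x hx
    · intro m hmK x
      rcases eq_or_ne x 0 with rfl | hx
      · exact (hlittle m (by omega) (hzero m (by omega))).differentiableAt
      · exact hdiffAt m (by omega) x hx
  refine ⟨⟨hcd, ?_⟩, ?_⟩
  · intro K hK
    obtain ⟨R₀, hR₀⟩ := hK.isBounded.subset_closedBall 0
    have hRpos : (0:ℝ) < max R₀ 1 := lt_of_lt_of_le one_pos (le_max_right _ _)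
    obtain ⟨C, hC0, hbound, -⟩ := aux_key k a ha b hb (le_refl k) hRpos
    have hd : ∀ x ∈ Metric.closedBall (0 : EuclideanSpace ℝ (Fin n)) (max R₀ 1), x ≠ 0 →
        HasFDerivAt (iteratedFDeriv ℝ (k - 1) b)
          (fderiv ℝ (iteratedFDeriv ℝ (k - 1) b) x) x ∧
        ‖fderiv ℝ (iteratedFDeriv ℝ (k - 1) b) x‖ ≤ C := by
      intro x hxball hxne
      refine ⟨(hdiffAt (k - 1) (by omega) x hxne).hasFDerivAt, ?_⟩
      have he : ‖fderiv ℝ (iteratedFDeriv ℝ (k - 1) b) x‖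
          = ‖iteratedFDeriv ℝ (k - 1 + 1) b x‖ := norm_fderiv_iteratedFDeriv
      rw [he, hKk]
      have hxR : ‖x‖ ≤ max R₀ 1 := by
        simpa [dist_eq_norm] using (Metric.mem_closedBall.1 hxball)
      have h := hbound x hxne hxR
      simpa [Nat.sub_self] using h
    have hlip := aux_lip (convex_closedBall (0 : EuclideanSpace ℝ (Fin n)) (max R₀ 1))
      (hcd.continuous_iteratedFDeriv le_rfl) hd
    refine ⟨C.toNNReal, ?_⟩
    have hsub : K ⊆ Metric.closedBall 0 (max R₀ 1) :=
      hR₀.trans (Metric.closedBall_subset_closedBall (le_max_left _ _))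
    apply LipschitzOnWith.mono ?_ hsub
    apply LipschitzOnWith.of_dist_le_mul
    intro x hx y hy
    rw [dist_eq_norm, dist_eq_norm, Real.coe_toNNReal C hC0]
    exact hlip x hx y hy
  · intro hind
    obtain ⟨C, hC0, -, hglobal⟩ := aux_key k a ha b hb (le_refl k) one_pos
    have hd : ∀ x ∈ (Set.univ : Set (EuclideanSpace ℝ (Fin n))), x ≠ 0 →
        HasFDerivAt (iteratedFDeriv ℝ (k - 1) b)
          (fderiv ℝ (iteratedFDeriv ℝ (k - 1) b) x) x ∧
        ‖fderiv ℝ (iteratedFDeriv ℝ (k - 1) b) x‖ ≤ C := by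
      intro x _ hxne
      refine ⟨(hdiffAt (k - 1) (by omega) x hxne).hasFDerivAt, ?_⟩
      have he : ‖fderiv ℝ (iteratedFDeriv ℝ (k - 1) b) x‖
          = ‖iteratedFDeriv ℝ (k - 1 + 1) b x‖ := norm_fderiv_iteratedFDeriv
      rw [he, hKk]
      have h := hglobal hind x hxne
      simpa [Nat.sub_self] using h
    have hlip := aux_lip convex_univ (hcd.continuous_iteratedFDeriv le_rfl) hd
    refine ⟨C.toNNReal, ?_⟩
    apply LipschitzWith.of_dist_le_mul
    intro x y
    rw [dist_eq_norm, dist_eq_norm, Real.coe_toNNReal C hC0]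
    exact hlip x (Set.mem_univ x) y (Set.mem_univ y)
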